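/- Let k ≥ 2 be an integer, let S be a finite nonempty set, let V be a set with |V| ≤ k, and let (f_s)_{s ∈ S} be any family of functions f_s : S → V. Then for every randomized strategy μ on deterministic strategies q : List V → S there exists s ∈ S with E_{q∼μ}[τ(q, f_s, {s})] ≥ log|S|/log k − 2. -/

import Mathlib

open scoped ENNReal

namespace BBC

variable {S V : Type*}

/-- The history of observed objective values after `t` queries:
`hist q f t = [f x₁, …, f x_t]`, where `x₁ = q []` and
`x_{t+1} = q [f x₁, …, f x_t]`. -/
def hist (q : List V → S) (f : S → V) : ℕ → List V
  | 0 => []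
  | t + 1 => hist q f t ++ [f (q (hist q f t))]

/-- `queryPt q f t` is the `(t+1)`-st queried search point `x_{t+1}`. -/
def queryPt (q : List V → S) (f : S → V) (t : ℕ) : S := q (hist q f t)

/-- The hitting time of a deterministic strategy `q` on objective `f` with
target set `M`: the least `t ≥ 1` with `x_t ∈ M`, valued in `ℕ∞`
(and `⊤` if no query ever hits `M`). -/
noncomputable def hitTime (q : List V → S) (f : S → V) (M : Set S) : ℕ∞ :=
  sInf ((fun k : ℕ => (k : ℕ∞) + 1) '' {k | queryPt q f k ∈ M})

/-- The expected hitting time of a randomized strategy `μ` (a probability mass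
function on deterministic strategies) on `(f, M)`, valued in `[0,∞]`. -/
noncomputable def expHitTime (μ : PMF (List V → S)) (f : S → V) (M : Set S) : ℝ≥0∞ :=
  ∑' q, μ q * (hitTime q f M : ℝ≥0∞)

end BBC

/- ### Auxiliary lemmas for the proof -/

open scoped Classical
open Finset

namespace BBCAux
open BBC

variable {S V : Type*}

lemma hist_length (q : List V → S) (f : S → V) (t : ℕ) : (hist q f t).length = t := by
  induction t with
  | zero => rfl
  | succ t ih => simp [hist, ih]

/-- Over any range, the number of steps before the first hit is at most the
hitting time. -/
lemma sum_indicator_le_hitTime (q : List V → S) (f : S → V) (s : S) (N : ℕ) :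
    ∑ m ∈ Finset.range N, (if ∃ j < m, queryPt q f j = s then (0:ℝ≥0∞) else 1)
      ≤ (hitTime q f {s} : ℝ≥0∞) := by
  by_cases hex : ∃ j, queryPt q f j = s
  · set j₀ := Nat.find hex with hj₀
    have hτ : hitTime q f {s} = (j₀ + 1 : ℕ) := by
      apply le_antisymm
      · exact sInf_le ⟨j₀, Nat.find_spec hex, by push_cast; ring⟩
      · apply le_sInf
        rintro b ⟨j, hj, rfl⟩
        have : j₀ ≤ j := Nat.find_min' hex hj
        push_cast
        exact_mod_cast add_le_add_left (Nat.cast_le.mpr this) 1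
    have hb : ∀ m ∈ Finset.range N,
        (if ∃ j < m, queryPt q f j = s then (0:ℝ≥0∞) else 1)
          ≤ (if m < j₀ + 1 then (1:ℝ≥0∞) else 0) := by
      intro m _
      by_cases hm : m < j₀ + 1
      · simp only [hm, if_true]
        split <;> simp
      · have : ∃ j < m, queryPt q f j = s :=
          ⟨j₀, by omega, Nat.find_spec hex⟩
        simp [this, hm]
    calc ∑ m ∈ Finset.range N, (if ∃ j < m, queryPt q f j = s then (0:ℝ≥0∞) else 1)
        ≤ ∑ m ∈ Finset.range N, (if m < j₀ + 1 then (1:ℝ≥0∞) else 0) :=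
          Finset.sum_le_sum hb
      _ = ((Finset.range N).filter (fun m => m < j₀ + 1)).card := by
          rw [Finset.sum_boole]
      _ ≤ ((j₀ + 1 : ℕ) : ℝ≥0∞) := by
          have : ((Finset.range N).filter (fun m => m < j₀ + 1)) ⊆ Finset.range (j₀+1) := by
            intro m hm
            simp only [Finset.mem_filter] at hm
            exact Finset.mem_range.mpr hm.2
          have := Finset.card_le_card this
          simp only [Finset.card_range] at this
          exact_mod_cast this
      _ = (hitTime q f {s} : ℝ≥0∞) := by rw [hτ]; simp
  · have hτ : hitTime q f {s} = ⊤ := by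
      rw [hitTime]
      convert sInf_empty
      · rfl
      push_neg at hex
      simp [Set.image_eq_empty, Set.eq_empty_iff_forall_notMem, hex]
    rw [hτ]
    simp

lemma geom_le (k m : ℕ) (hk : 2 ≤ k) : ∑ j ∈ Finset.range m, k ^ j ≤ k ^ m := by
  induction m with
  | zero => simp
  | succ m ih =>
    rw [Finset.sum_range_succ, pow_succ]
    have : k ^ m * 2 ≤ k ^ m * k := Nat.mul_le_mul_left _ hk
    omega

variable [Fintype S] [Fintype V]

/-- The number of instances whose target is queried at step `j` is at most
`|V| ^ j`, since the query point is determined by the history. -/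
lemma card_hit_step (q : List V → S) (f : S → S → V) (j : ℕ) :
    (univ.filter (fun s : S => queryPt q (f s) j = s)).card ≤ Fintype.card V ^ j := by
  have h : (univ.filter (fun s : S => queryPt q (f s) j = s)).card
      ≤ (univ : Finset (Fin j → V)).card := by
    apply Finset.card_le_card_of_injOn
      (fun s i => (hist q (f s) j).get (i.cast (hist_length q (f s) j).symm))
    · intro s _; exact mem_univ _
    · intro a ha b hb hab
      have hl : hist q (f a) j = hist q (f b) j := by
        apply List.ext_get (by simp [hist_length])
        intro i h1 h2
        have := congrFun hab ⟨i, (hist_length q (f a) j) ▸ h1⟩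
        simpa using this
      simp only [mem_coe, mem_filter, mem_univ, true_and] at ha hb
      rw [← ha, ← hb, queryPt, queryPt, hl]
  simpa [Fintype.card_fun] using h

lemma card_hit_by (q : List V → S) (f : S → S → V) (m : ℕ) :
    (univ.filter (fun s : S => ∃ j < m, queryPt q (f s) j = s)).card
      ≤ ∑ j ∈ range m, Fintype.card V ^ j := by
  have hsub : (univ.filter (fun s : S => ∃ j < m, queryPt q (f s) j = s))
      ⊆ (range m).biUnion (fun j => univ.filter (fun s : S => queryPt q (f s) j = s)) := by
    intro s hs
    simp only [mem_filter, mem_univ, true_and] at hs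
    obtain ⟨j, hj, hjs⟩ := hs
    simp only [mem_biUnion, mem_range, mem_filter, mem_univ, true_and]
    exact ⟨j, hj, hjs⟩
  calc _ ≤ _ := Finset.card_le_card hsub
    _ ≤ ∑ j ∈ range m, (univ.filter (fun s : S => queryPt q (f s) j = s)).card :=
        Finset.card_biUnion_le
    _ ≤ _ := Finset.sum_le_sum (fun j _ => card_hit_step q f j)

variable [Nonempty S]

/-- Key deterministic bound: for every deterministic strategy, the total
hitting time over all instances is at least `(log_k n + 1) · n - 2n`. -/
lemma key (k : ℕ) (hk : 2 ≤ k) (hV : Fintype.card V ≤ k)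
    (f : S → S → V) (q : List V → S) :
    ((Nat.log k (Fintype.card S) + 1 : ℕ) : ℝ≥0∞) * (Fintype.card S : ℝ≥0∞)
      ≤ (∑ s : S, (hitTime q (f s) {s} : ℝ≥0∞)) + 2 * (Fintype.card S : ℝ≥0∞) := by
  set n := Fintype.card S with hn
  set T := Nat.log k n with hT
  have hstep : ∀ m : ℕ, (n : ℝ≥0∞) ≤
      (∑ s : S, (if ∃ j < m, queryPt q (f s) j = s then (0:ℝ≥0∞) else 1)) + ((k ^ m : ℕ) : ℝ≥0∞) := by
    intro m
    have hsplit : (univ.filter (fun s : S => ∃ j < m, queryPt q (f s) j = s)).card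
        + (univ.filter (fun s : S => ¬ ∃ j < m, queryPt q (f s) j = s)).card = n := by
      rw [Finset.card_filter_add_card_filter_not]
      exact (Finset.card_univ)
    have hcard : (univ.filter (fun s : S => ∃ j < m, queryPt q (f s) j = s)).card ≤ k ^ m := by
      calc _ ≤ ∑ j ∈ range m, Fintype.card V ^ j := card_hit_by q f m
        _ ≤ ∑ j ∈ range m, k ^ j :=
            Finset.sum_le_sum (fun j _ => Nat.pow_le_pow_left hV j)
        _ ≤ k ^ m := geom_le k m hk
    have hsum : (∑ s : S, (if ∃ j < m, queryPt q (f s) j = s then (0:ℝ≥0∞) else 1))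
        = ((univ.filter (fun s : S => ¬ ∃ j < m, queryPt q (f s) j = s)).card : ℝ≥0∞) := by
      rw [← Finset.sum_boole]
      apply Finset.sum_congr rfl
      intro s _
      by_cases h : ∃ j < m, queryPt q (f s) j = s <;> simp [h]
    rw [hsum]
    have : n ≤ (univ.filter (fun s : S => ¬ ∃ j < m, queryPt q (f s) j = s)).card + k ^ m := by
      omega
    exact_mod_cast this
  have hgeo : (∑ m ∈ range (T+1), ((k ^ m : ℕ) : ℝ≥0∞)) ≤ 2 * (n : ℝ≥0∞) := by
    have h1 : ∑ m ∈ range (T+1), k ^ m ≤ 2 * k ^ T := by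
      rw [Finset.sum_range_succ]
      have := geom_le k T hk
      omega
    have h2 : k ^ T ≤ n := Nat.pow_log_le_self k (Fintype.card_ne_zero)
    have : ∑ m ∈ range (T+1), k ^ m ≤ 2 * n := by omega
    calc (∑ m ∈ range (T+1), ((k ^ m : ℕ) : ℝ≥0∞))
        = ((∑ m ∈ range (T+1), k ^ m : ℕ) : ℝ≥0∞) := by push_cast; ring
      _ ≤ ((2 * n : ℕ) : ℝ≥0∞) := by exact_mod_cast this
      _ = 2 * (n : ℝ≥0∞) := by push_cast; ring
  calc ((T + 1 : ℕ) : ℝ≥0∞) * (n : ℝ≥0∞)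
      = ∑ m ∈ range (T+1), (n : ℝ≥0∞) := by
        rw [Finset.sum_const, Finset.card_range]; push_cast; ring
    _ ≤ ∑ m ∈ range (T+1),
          ((∑ s : S, (if ∃ j < m, queryPt q (f s) j = s then (0:ℝ≥0∞) else 1))
            + ((k ^ m : ℕ) : ℝ≥0∞)) := Finset.sum_le_sum (fun m _ => hstep m)
    _ = (∑ m ∈ range (T+1), ∑ s : S, (if ∃ j < m, queryPt q (f s) j = s then (0:ℝ≥0∞) else 1))
          + ∑ m ∈ range (T+1), ((k ^ m : ℕ) : ℝ≥0∞) := Finset.sum_add_distrib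
    _ = (∑ s : S, ∑ m ∈ range (T+1), (if ∃ j < m, queryPt q (f s) j = s then (0:ℝ≥0∞) else 1))
          + ∑ m ∈ range (T+1), ((k ^ m : ℕ) : ℝ≥0∞) := by rw [Finset.sum_comm]
    _ ≤ (∑ s : S, (hitTime q (f s) {s} : ℝ≥0∞)) + 2 * (n : ℝ≥0∞) :=
        add_le_add (Finset.sum_le_sum
          (fun s _ => sum_indicator_le_hitTime q (f s) s (T+1))) hgeo

/-- Averaged version of `key` over a randomized strategy. -/
lemma exp_key (k : ℕ) (hk : 2 ≤ k) (hV : Fintype.card V ≤ k)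
    (f : S → S → V) (μ : PMF (List V → S)) :
    ((Nat.log k (Fintype.card S) + 1 : ℕ) : ℝ≥0∞) * (Fintype.card S : ℝ≥0∞)
      ≤ (∑ s : S, expHitTime μ (f s) {s}) + 2 * (Fintype.card S : ℝ≥0∞) := by
  set n := Fintype.card S with hn
  set T := Nat.log k n with hT
  have h1 : ∑' q, μ q * ((∑ s : S, (hitTime q (f s) {s} : ℝ≥0∞)) + 2 * (n : ℝ≥0∞))
      = (∑ s : S, expHitTime μ (f s) {s}) + 2 * (n : ℝ≥0∞) := by
    simp only [mul_add]
    rw [ENNReal.tsum_add]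
    congr 1
    · simp only [Finset.mul_sum]
      rw [Summable.tsum_finsetSum (fun s _ => ENNReal.summable)]
      rfl
    · rw [ENNReal.tsum_mul_right, μ.tsum_coe, one_mul]
  rw [← h1]
  calc ((T + 1 : ℕ) : ℝ≥0∞) * (n : ℝ≥0∞)
      = ∑' q, μ q * (((T + 1 : ℕ) : ℝ≥0∞) * (n : ℝ≥0∞)) := by
        rw [ENNReal.tsum_mul_right, μ.tsum_coe, one_mul]
    _ ≤ _ := ENNReal.tsum_le_tsum (fun q =>
        mul_le_mul_right (key k hk hV f q) (μ q))

end BBCAux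

/-- Simple information-theoretic lower bound (Droste–Jansen–Wegener):
if every `f_s` takes at most `k ≥ 2` values and has `s` as target, then every
randomized strategy needs, on some instance, at least `log|S|/log k − 2`
expected queries. -/
theorem stmt1 {S V : Type*} [Fintype S] [Nonempty S] [Fintype V]
    (k : ℕ) (hk : 2 ≤ k) (hV : Fintype.card V ≤ k)
    (f : S → S → V) (μ : PMF (List V → S)) :
    ∃ s : S, ENNReal.ofReal (Real.log (Fintype.card S) / Real.log k - 2)
      ≤ BBC.expHitTime μ (f s) {s} := by
  by_contra hcon
  push_neg at hcon
  set n := Fintype.card S with hn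
  set T := Nat.log k n with hT
  set L : ℝ := Real.log n / Real.log k with hL
  set B : ℝ≥0∞ := ENNReal.ofReal (L - 2) with hB
  have hn0 : 0 < n := Fintype.card_pos
  have hlogk : 0 < Real.log k := Real.log_pos (by exact_mod_cast hk)
  have hLT : L < T + 1 := by
    have h1 : n < k ^ (T + 1) := Nat.lt_pow_succ_log_self (by omega) n
    have h2 : Real.log n < (T + 1) * Real.log k := by
      have : (n : ℝ) < (k : ℝ) ^ (T + 1) := by exact_mod_cast h1
      calc Real.log n < Real.log ((k:ℝ) ^ (T+1)) :=
            Real.log_lt_log (by exact_mod_cast hn0) this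
        _ = (T + 1) * Real.log k := by rw [Real.log_pow]; push_cast; ring
    rw [hL, div_lt_iff₀ hlogk]
    exact h2
  have hB0 : B ≠ 0 := by
    intro h0
    obtain ⟨s⟩ := (inferInstance : Nonempty S)
    have := hcon s
    rw [h0] at this
    exact (ENNReal.not_lt_zero this)
  have hL2 : 0 < L - 2 := by
    by_contra h
    exact hB0 (by rw [hB, ENNReal.ofReal_eq_zero]; linarith)
  have hsum : (∑ s : S, BBC.expHitTime μ (f s) {s}) ≤ (n : ℝ≥0∞) * B := by
    calc (∑ s : S, BBC.expHitTime μ (f s) {s}) ≤ ∑ _s : S, B :=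
          Finset.sum_le_sum (fun s _ => le_of_lt (hcon s))
      _ = (n : ℝ≥0∞) * B := by rw [Finset.sum_const, Finset.card_univ, nsmul_eq_mul]
  have hkey := BBCAux.exp_key k hk hV f μ
  have hmain : ((T + 1 : ℕ) : ℝ≥0∞) * (n : ℝ≥0∞) ≤ (B + 2) * (n : ℝ≥0∞) := by
    calc ((T + 1 : ℕ) : ℝ≥0∞) * (n : ℝ≥0∞)
        ≤ (∑ s : S, BBC.expHitTime μ (f s) {s}) + 2 * (n : ℝ≥0∞) := hkey
      _ ≤ (n : ℝ≥0∞) * B + 2 * (n : ℝ≥0∞) := add_le_add_left hsum _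
      _ = (B + 2) * (n : ℝ≥0∞) := by ring
  have hnne : ((n : ℝ≥0∞)) ≠ 0 := by exact_mod_cast hn0.ne'
  have hntop : ((n : ℝ≥0∞)) ≠ ⊤ := ENNReal.natCast_ne_top n
  have hc : ((T + 1 : ℕ) : ℝ≥0∞) ≤ B + 2 :=
    (ENNReal.mul_le_mul_iff_left hnne hntop).mp hmain
  have hBL : B + 2 = ENNReal.ofReal L := by
    have h2 : (2:ℝ≥0∞) = ENNReal.ofReal 2 := by norm_num
    rw [hB, h2, ← ENNReal.ofReal_add (by linarith : (0:ℝ) ≤ L - 2) (by norm_num : (0:ℝ) ≤ 2)]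
    norm_num
  rw [hBL] at hc
  have : ((T + 1 : ℕ) : ℝ) ≤ L := by
    rw [← ENNReal.ofReal_natCast] at hc
    exact (ENNReal.ofReal_le_ofReal_iff (by linarith)).mp hc
  push_cast at this
  linarith
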